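/- arXiv:1310.6931 — 4 statements merged into one kernel-verified Lean document; each statement's English description precedes it below -/
import Mathlib

section
/- Let κ, τ : ℝ → ℝ be differentiable with κ(s) > 0, and let a₁, a₂, a₃ : ℝ → ℝ satisfy a₁' = a₂κ, a₂' = −a₁κ + a₃τ, a₃' = −a₂τ with a₂ ≡ cos θ a nonzero constant. If additionally a₁² + a₂² + a₃² is constant and a₃ is nowhere zero, then a₁ = (τ/κ)·a₃, and there is a nonzero constant n with a₃ = n·κ/√(κ² + τ²) and a₁ = n·τ/√(κ² + τ²). -/
theorem stmt_5 (κ τ a₁ a₂ a₃ : ℝ → ℝ) (θ : ℝ)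
    (hκ : Differentiable ℝ κ) (hτ : Differentiable ℝ τ)
    (hκpos : ∀ s, 0 < κ s)
    (ha₁d : Differentiable ℝ a₁) (ha₂d : Differentiable ℝ a₂)
    (ha₃d : Differentiable ℝ a₃)
    (h1 : ∀ s, deriv a₁ s = a₂ s * κ s)
    (h2 : ∀ s, deriv a₂ s = -(a₁ s * κ s) + a₃ s * τ s)
    (h3 : ∀ s, deriv a₃ s = -(a₂ s * τ s))
    (ha₂ : ∀ s, a₂ s = Real.cos θ) (hθ : Real.cos θ ≠ 0)
    (hnorm : ∃ C, ∀ s, a₁ s ^ 2 + a₂ s ^ 2 + a₃ s ^ 2 = C)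
    (ha₃ : ∀ s, a₃ s ≠ 0) :
    (∀ s, a₁ s = (τ s / κ s) * a₃ s) ∧
    ∃ n : ℝ, n ≠ 0 ∧ ∀ s,
      a₃ s = n * κ s / Real.sqrt (κ s ^ 2 + τ s ^ 2) ∧
      a₁ s = n * τ s / Real.sqrt (κ s ^ 2 + τ s ^ 2) := by
  have ha₂fun : a₂ = fun _ => Real.cos θ := funext ha₂
  have hderiv0 : ∀ s, deriv a₂ s = 0 := by
    intro s; rw [ha₂fun]; simp
  have hkey : ∀ s, a₁ s * κ s = a₃ s * τ s := by
    intro s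
    have := h2 s
    rw [hderiv0 s] at this
    linarith
  have hκne : ∀ s, κ s ≠ 0 := fun s => (hκpos s).ne'
  have hA1 : ∀ s, a₁ s = (τ s / κ s) * a₃ s := by
    intro s
    rw [div_mul_eq_mul_div, eq_div_iff (hκne s)]
    linarith [hkey s, mul_comm (τ s) (a₃ s)]
  -- positivity of κ²+τ²
  have hsum : ∀ s, 0 < κ s ^ 2 + τ s ^ 2 := by
    intro s
    have := hκpos s
    positivity
  have hsqrt : ∀ s, 0 < Real.sqrt (κ s ^ 2 + τ s ^ 2) :=
    fun s => Real.sqrt_pos.2 (hsum s)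
  obtain ⟨C, hC⟩ := hnorm
  set C' := C - Real.cos θ ^ 2 with hC'
  have hC'eq : ∀ s, a₁ s ^ 2 + a₃ s ^ 2 = C' := by
    intro s
    have := hC s
    rw [ha₂ s] at this
    linarith
  set g : ℝ → ℝ := fun s => a₃ s * Real.sqrt (κ s ^ 2 + τ s ^ 2) / κ s with hg
  have hgsq : ∀ s, g s ^ 2 = C' := by
    intro s
    have h1' : a₁ s = (τ s / κ s) * a₃ s := hA1 s
    have h2' : a₁ s ^ 2 + a₃ s ^ 2 = C' := hC'eq s
    have hsq : Real.sqrt (κ s ^ 2 + τ s ^ 2) ^ 2 = κ s ^ 2 + τ s ^ 2 :=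
      Real.sq_sqrt (hsum s).le
    have : a₃ s ^ 2 * (κ s ^ 2 + τ s ^ 2) = C' * κ s ^ 2 := by
      rw [h1'] at h2'
      have hκ2 : κ s ^ 2 ≠ 0 := pow_ne_zero 2 (hκne s)
      field_simp at h2'
      have e : τ s ^ 2 / κ s ^ 2 * κ s ^ 2 = τ s ^ 2 := div_mul_cancel₀ _ hκ2
      rw [← h2']
      linear_combination (-(a₃ s ^ 2)) * e
    show (a₃ s * Real.sqrt (κ s ^ 2 + τ s ^ 2) / κ s) ^ 2 = C'
    rw [div_pow, mul_pow, hsq, this]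
    exact mul_div_cancel_right₀ C' (pow_ne_zero 2 (hκne s))
  have hgne : ∀ s, g s ≠ 0 := by
    intro s
    show a₃ s * Real.sqrt (κ s ^ 2 + τ s ^ 2) / κ s ≠ 0
    exact div_ne_zero (mul_ne_zero (ha₃ s) (hsqrt s).ne') (hκne s)
  have hgcont : Continuous g := by
    apply Continuous.div
    · exact ha₃d.continuous.mul (Real.continuous_sqrt.comp
        ((hκ.continuous.pow 2).add (hτ.continuous.pow 2)))
    · exact hκ.continuous
    · exact hκne
  have hgconst : ∀ s, g s = g 0 := by
    intro s
    by_contra hne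
    have hsq : g s ^ 2 = g 0 ^ 2 := by rw [hgsq, hgsq]
    have hfac : (g s - g 0) * (g s + g 0) = 0 := by nlinarith [hsq]
    have hneg : g s = -g 0 := by
      rcases mul_eq_zero.mp hfac with h | h
      · exact absurd (by linarith) hne
      · linarith
    have h0mem : (0 : ℝ) ∈ Set.uIcc (g 0) (g s) := by
      rw [hneg, Set.mem_uIcc]
      rcases lt_or_gt_of_ne (hgne 0) with h | h
      · left; constructor <;> linarith
      · right; constructor <;> linarith
    have := intermediate_value_uIcc (a := (0:ℝ)) (b := s) hgcont.continuousOn h0mem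
    obtain ⟨c, _, hc⟩ := this
    exact hgne c hc
  refine ⟨hA1, g 0, hgne 0, fun s => ?_⟩
  have hgs : a₃ s * Real.sqrt (κ s ^ 2 + τ s ^ 2) / κ s = g 0 := hgconst s
  rw [div_eq_iff (hκne s)] at hgs
  have h3' : a₃ s = g 0 * κ s / Real.sqrt (κ s ^ 2 + τ s ^ 2) := by
    rw [eq_div_iff (hsqrt s).ne']
    exact hgs
  refine ⟨h3', ?_⟩
  rw [hA1 s, h3']
  have haux : ∀ (x y z w : ℝ), y ≠ 0 → w ≠ 0 → x / y * (z * y / w) = z * x / w := by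
    intro x y z w hy hw
    field_simp
  exact haux (τ s) (κ s) (g 0) _ (hκne s) (hsqrt s).ne'
end

section
/- Let a₁, a₂, a₃, κ, τ : ℝ → ℝ be differentiable satisfying a₁' = a₂κ, a₂' = −a₁κ + a₃τ, a₃' = −a₂τ, with a₃ nowhere zero and τ' nowhere zero, and suppose a₁τ + a₃κ is constant. Then a₂' = a₃·(κ² + τ²)'/(2τ'). Consequently, a₂ is constant if and only if κ² + τ² is constant. -/
theorem stmt_9 (a₁ a₂ a₃ κ τ : ℝ → ℝ)
    (ha₁d : Differentiable ℝ a₁) (ha₂d : Differentiable ℝ a₂)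
    (ha₃d : Differentiable ℝ a₃)
    (hκ : Differentiable ℝ κ) (hτ : Differentiable ℝ τ)
    (h1 : ∀ s, deriv a₁ s = a₂ s * κ s)
    (h2 : ∀ s, deriv a₂ s = -(a₁ s * κ s) + a₃ s * τ s)
    (h3 : ∀ s, deriv a₃ s = -(a₂ s * τ s))
    (ha₃ : ∀ s, a₃ s ≠ 0) (hτ' : ∀ s, deriv τ s ≠ 0)
    (hconst : ∃ C, ∀ s, a₁ s * τ s + a₃ s * κ s = C) :
    (∀ s, deriv a₂ s =
      a₃ s * deriv (fun u => κ u ^ 2 + τ u ^ 2) s / (2 * deriv τ s)) ∧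
    ((∃ c, ∀ s, a₂ s = c) ↔ (∃ c, ∀ s, κ s ^ 2 + τ s ^ 2 = c)) := by
  obtain ⟨C, hC⟩ := hconst
  -- derivative of κ² + τ²
  have hQd : ∀ s, deriv (fun u => κ u ^ 2 + τ u ^ 2) s
      = 2 * κ s * deriv κ s + 2 * τ s * deriv τ s := by
    intro s
    rw [deriv_fun_add (f := fun u => κ u ^ 2) (g := fun u => τ u ^ 2) ((hκ s).pow 2) ((hτ s).pow 2), deriv_fun_pow (hκ s) 2,
      deriv_fun_pow (hτ s) 2]
    ring
  -- differentiate the constancy relation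
  have hkey : ∀ s, a₁ s * deriv τ s = -(a₃ s * deriv κ s) := by
    intro s
    have hF : (fun s => a₁ s * τ s + a₃ s * κ s) = fun _ => C := funext hC
    have hd : deriv (fun s => a₁ s * τ s + a₃ s * κ s) s = 0 := by
      rw [hF]; simp
    rw [deriv_fun_add (f := fun s => a₁ s * τ s) (g := fun s => a₃ s * κ s) ((ha₁d s).mul (hτ s)) ((ha₃d s).mul (hκ s)),
      deriv_fun_mul (ha₁d s) (hτ s), deriv_fun_mul (ha₃d s) (hκ s),
      h1 s, h3 s] at hd
    nlinarith [hd]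
  have main : ∀ s, deriv a₂ s =
      a₃ s * deriv (fun u => κ u ^ 2 + τ u ^ 2) s / (2 * deriv τ s) := by
    intro s
    rw [hQd s, h2 s]
    have h := hkey s
    have hne := hτ' s
    field_simp
    linear_combination (-κ s) * h
  refine ⟨main, ?_⟩
  constructor
  · rintro ⟨c, hc⟩
    have hder : ∀ s, deriv (fun u => κ u ^ 2 + τ u ^ 2) s = 0 := by
      intro s
      have h0 : deriv a₂ s = 0 := by
        have : a₂ = fun _ => c := funext hc
        rw [this]; simp
      rw [main s] at h0
      rcases div_eq_zero_iff.mp h0 with h | h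
      · rcases mul_eq_zero.mp h with h | h
        · exact absurd h (ha₃ s)
        · exact h
      · exact absurd h (by simpa using hτ' s)
    refine ⟨κ 0 ^ 2 + τ 0 ^ 2, fun s => ?_⟩
    exact is_const_of_deriv_eq_zero (((hκ.pow 2).add (hτ.pow 2))) hder s 0
  · rintro ⟨c, hc⟩
    have hder : ∀ s, deriv a₂ s = 0 := by
      intro s
      have : (fun u => κ u ^ 2 + τ u ^ 2) = fun _ => c := funext hc
      rw [main s, this]
      simp
    exact ⟨a₂ 0, fun s => is_const_of_deriv_eq_zero ha₂d hder s 0⟩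
end

section
/- Suppose κ, τ : ℝ → ℝ satisfy κ(s) = w·sin(μs) and τ(s) = w·cos(μs) for constants w > 0 and μ (curve of constant precession). Then κ² + τ² = w² is constant, and conversely, if κ² + τ² is constant and the slant-helix invariant κ²(τ/κ)'/(κ²+τ²)^{3/2} is constant (with κ nowhere zero), then there exist constants w > 0 and μ such that κ and τ are of the above form up to a shift of parameter, i.e., (κ, τ) = (w sin(μs + c), w cos(μs + c)) for some constant c. -/
open Complex

theorem stmt_11 (κ τ : ℝ → ℝ) :
    (∀ w : ℝ, 0 < w → ∀ μ : ℝ,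
      (∀ s, κ s = w * Real.sin (μ * s) ∧ τ s = w * Real.cos (μ * s)) →
      ∀ s, κ s ^ 2 + τ s ^ 2 = w ^ 2) ∧
    ((Differentiable ℝ κ ∧ Differentiable ℝ τ ∧ (∀ s, κ s ≠ 0) ∧
      (∃ C, ∀ s, κ s ^ 2 + τ s ^ 2 = C) ∧
      (∃ σ, ∀ s, κ s ^ 2 * deriv (fun u => τ u / κ u) s /
        (κ s ^ 2 + τ s ^ 2) ^ ((3 : ℝ) / 2) = σ)) →
      ∃ w : ℝ, 0 < w ∧ ∃ μ c : ℝ, ∀ s,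
        κ s = w * Real.sin (μ * s + c) ∧ τ s = w * Real.cos (μ * s + c)) := by
  constructor
  · intro w hw μ h s
    obtain ⟨h1, h2⟩ := h s
    rw [h1, h2]
    nlinarith [Real.sin_sq_add_cos_sq (μ * s)]
  · rintro ⟨hκ, hτ, hκ0, ⟨C, hC⟩, ⟨σ, hσ⟩⟩
    have hC0 : 0 < C := by
      have h0 := hC 0
      have h1 : 0 < κ 0 ^ 2 := (sq_nonneg _).lt_of_ne (Ne.symm (pow_ne_zero 2 (hκ0 0)))
      nlinarith [sq_nonneg (τ 0)]
    have hCne : C ≠ 0 := hC0.ne'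
    set K := σ * C ^ ((3:ℝ)/2) with hKdef
    have hCr : (0:ℝ) < C ^ ((3:ℝ)/2) := Real.rpow_pos_of_pos hC0 _
    -- the invariant condition gives κ τ' - τ κ' = K
    have hK : ∀ s, κ s * deriv τ s - τ s * deriv κ s = K := by
      intro s
      have h1 := hσ s
      have hdd : deriv (fun u => τ u / κ u) s = (deriv τ s * κ s - τ s * deriv κ s) / κ s ^ 2 :=
        deriv_div (hτ s) (hκ s) (hκ0 s)
      rw [hC s, hdd] at h1
      have hκ2 : (κ s) ^ 2 ≠ 0 := pow_ne_zero 2 (hκ0 s)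
      rw [div_eq_iff hCr.ne'] at h1
      field_simp at h1
      rw [mul_div_cancel_left₀ _ (hκ0 s)] at h1
      rw [hKdef]
      linear_combination h1
    -- constancy of κ²+τ² gives κ κ' + τ τ' = 0
    have hsum : ∀ s, κ s * deriv κ s + τ s * deriv τ s = 0 := by
      intro s
      have hd : HasDerivAt (fun u => κ u ^ 2 + τ u ^ 2)
          ((2:ℕ) * κ s ^ (2-1) * deriv κ s + (2:ℕ) * τ s ^ (2-1) * deriv τ s) s :=
        (((hκ s).hasDerivAt.pow 2).add ((hτ s).hasDerivAt.pow 2))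
      have h0 : deriv (fun u => κ u ^ 2 + τ u ^ 2) s = 0 := by
        have hfun : (fun u => κ u ^ 2 + τ u ^ 2) = fun _ => C := funext hC
        rw [hfun]; exact deriv_const s C
      have h2 := hd.deriv
      rw [h0] at h2
      have h2' : (0:ℝ) = 2 * κ s * deriv κ s + 2 * τ s * deriv τ s := by
        rw [h2]; push_cast; ring
      linarith
    have hdτ : ∀ s, C * deriv τ s = K * κ s := fun s => by
      linear_combination (-(deriv τ s)) * (hC s) + κ s * (hK s) + τ s * (hsum s)
    have hdκ : ∀ s, C * deriv κ s = -(K * τ s) := fun s => by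
      linear_combination (-(deriv κ s)) * (hC s) + κ s * (hsum s) - τ s * (hK s)
    set μ := -(K / C) with hμdef
    have hτ' : ∀ s, deriv τ s = -μ * κ s := by
      intro s
      rw [hμdef]
      field_simp
      linarith [hdτ s, hKdef]
    have hκ' : ∀ s, deriv κ s = μ * τ s := by
      intro s
      rw [hμdef]
      field_simp
      linarith [hdκ s, hKdef]
    -- complex exponential trick
    have key : ∀ s, HasDerivAt (fun u => ((τ u : ℂ) + κ u * I) *
        Complex.exp ((-(μ * u) : ℝ) * I)) 0 s := by
      intro s
      have h1 : HasDerivAt (fun u => ((τ u : ℂ) + κ u * I))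
          (((deriv τ s : ℝ) : ℂ) + ((deriv κ s : ℝ) : ℂ) * I) s :=
        ((hτ s).hasDerivAt.ofReal_comp).add (((hκ s).hasDerivAt.ofReal_comp).mul_const I)
      have h2 : HasDerivAt (fun u : ℝ => ((-(μ * u) : ℝ) : ℂ) * I) (((-μ : ℝ) : ℂ) * I) s := by
        have hr : HasDerivAt (fun u : ℝ => -(μ * u)) (-μ) s := by
          exact (((hasDerivAt_id s).const_mul μ).neg).congr_deriv (by simp)
        exact hr.ofReal_comp.mul_const I
      have h3 := h2.cexp
      have h4 := h1.mul h3
      refine h4.congr_deriv ?_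
      symm
      rw [hτ' s, hκ' s]
      linear_combination (norm := (push_cast; ring1))
        (Complex.exp ((((-(μ * s)) : ℝ) : ℂ) * I) * (μ : ℂ) * (κ s : ℂ)) * Complex.I_sq
    have hconst : ∀ s, ((τ s : ℂ) + κ s * I) * Complex.exp ((-(μ * s) : ℝ) * I)
        = (τ 0 : ℂ) + κ 0 * I := by
      intro s
      have h5 := is_const_of_deriv_eq_zero (f := fun u => ((τ u : ℂ) + κ u * I) *
        Complex.exp ((-(μ * u) : ℝ) * I)) (fun x => (key x).differentiableAt)
        (fun x => (key x).deriv) s 0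
      simpa using h5
    refine ⟨Real.sqrt C, Real.sqrt_pos.mpr hC0, μ, ((τ 0 : ℂ) + κ 0 * I).arg, fun s => ?_⟩
    set w := Real.sqrt C with hwdef
    set c := ((τ 0 : ℂ) + κ 0 * I).arg with hcdef
    have habs : ‖(τ 0 : ℂ) + κ 0 * I‖ = w := by
      rw [Complex.norm_add_mul_I, hwdef]
      congr 1
      linarith [hC 0]
    have hz : ((τ 0 : ℂ) + κ 0 * I) = (w : ℂ) * Complex.exp ((c : ℂ) * I) := by
      rw [← habs]
      exact (Complex.norm_mul_exp_arg_mul_I _).symm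
    have h6 : (τ s : ℂ) + κ s * I = ((τ 0 : ℂ) + κ 0 * I) *
        Complex.exp (((μ * s : ℝ)) * I) := by
      rw [← hconst s, mul_assoc, ← Complex.exp_add]
      have : ((-(μ * s) : ℝ) : ℂ) * I + ((μ * s : ℝ)) * I = 0 := by push_cast; ring
      rw [this, Complex.exp_zero, mul_one]
    have heq : (τ s : ℂ) + κ s * I = (w : ℂ) * Complex.exp (((μ * s + c : ℝ)) * I) := by
      rw [h6, hz, mul_assoc, ← Complex.exp_add]
      congr 2
      push_cast
      ring
    rw [Complex.ext_iff] at heq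
    obtain ⟨hre, him⟩ := heq
    simp [Complex.exp_ofReal_mul_I_re, Complex.exp_ofReal_mul_I_im, Complex.mul_re,
      Complex.mul_im] at hre him
    have harg : ((μ:ℂ) * s + c) = ((μ * s + c : ℝ) : ℂ) := by push_cast; ring
    rw [harg, Complex.exp_ofReal_mul_I_re] at hre
    rw [harg, Complex.exp_ofReal_mul_I_im] at him
    exact ⟨him, hre⟩
end

section
/- Suppose κ, τ : ℝ → ℝ are differentiable, κ > 0, τ nowhere zero, and there are differentiable functions a₁, a₃ with a₁τ' + a₃κ' = 0 and a₁κ − a₃τ = 0 at every point, with a₃ nowhere zero. Then κκ' + ττ' = 0, i.e., κ² + τ² is constant. -/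
theorem stmt_17 (κ τ a₁ a₃ : ℝ → ℝ)
    (hκ : Differentiable ℝ κ) (hτ : Differentiable ℝ τ)
    (hκpos : ∀ s, 0 < κ s) (hτ0 : ∀ s, τ s ≠ 0)
    (h1 : ∀ s, a₁ s * deriv τ s + a₃ s * deriv κ s = 0)
    (h2 : ∀ s, a₁ s * κ s - a₃ s * τ s = 0)
    (ha₃ : ∀ s, a₃ s ≠ 0) :
    (∀ s, κ s * deriv κ s + τ s * deriv τ s = 0) ∧
    (∃ C, ∀ s, κ s ^ 2 + τ s ^ 2 = C) := by
  have key : ∀ s, κ s * deriv κ s + τ s * deriv τ s = 0 := by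
    intro s
    have hκ0 : κ s ≠ 0 := (hκpos s).ne'
    have h2s := h2 s
    have h1s := h1 s
    have ha1 : a₁ s = a₃ s * τ s / κ s := by field_simp; linarith
    rw [ha1] at h1s
    have : a₃ s * (τ s * deriv τ s + κ s * deriv κ s) / κ s = 0 := by
      field_simp at h1s ⊢; linarith
    have := (div_eq_zero_iff.mp this).resolve_right hκ0
    have := (mul_eq_zero.mp this).resolve_left (ha₃ s)
    linarith
  refine ⟨key, ?_⟩
  have hd : ∀ s, deriv (fun s => κ s ^ 2 + τ s ^ 2) s = 0 := by
    intro s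
    rw [deriv_fun_add ((hκ s).fun_pow 2) ((hτ s).fun_pow 2), deriv_fun_pow (hκ s), deriv_fun_pow (hτ s)]
    push_cast
    ring_nf
    nlinarith [key s]
  have hconst := is_const_of_deriv_eq_zero (f := fun s => κ s ^ 2 + τ s ^ 2)
    ((hκ.pow 2).add (hτ.pow 2)) hd
  exact ⟨κ 0 ^ 2 + τ 0 ^ 2, fun s => hconst s 0⟩
end
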